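/- Let p ≥ 2 be a real number and let S : [0,∞) → ℝ be differentiable with S(0) = 0 and S′(t) = (1 + S(t)^p)^{1/p} for all t ≥ 0. Then the function sinhc_p : [0,∞) → ℝ defined by sinhc_p(t) = S(t)/t for t > 0 and sinhc_p(0) = 1 is monotonically nondecreasing on [0,∞). -/

import Mathlib

/-- The function `sinhc_p(t) = sinh_p(t)/t` (with value `1` at `t = 0`) is monotonically
nondecreasing on `[0, ∞)`, where `sinh_p = S` solves `S(0) = 0`,
`S′(t) = (1 + S(t)^p)^{1/p}`. -/
theorem sinhcp_monotone
    (p : ℝ) (hp : 2 ≤ p)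
    (S : ℝ → ℝ) (hS0 : S 0 = 0)
    (hS : ∀ t ∈ Set.Ici (0 : ℝ),
      HasDerivWithinAt S ((1 + S t ^ p) ^ (1 / p)) (Set.Ici 0) t) :
    MonotoneOn (fun t => if t = 0 then 1 else S t / t) (Set.Ici 0) := by
  have hp0 : (0 : ℝ) < p := by linarith
  have hip : 0 < 1 / p := by positivity
  have hipl : 1 / p ≤ 1 / 2 := by
    apply one_div_le_one_div_of_le <;> linarith
  -- the derivative is always nonnegative
  have hderiv_nonneg : ∀ x : ℝ, (0 : ℝ) ≤ (1 + x ^ p) ^ (1 / p) := by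
    intro x
    rcases le_or_gt 0 (1 + x ^ p) with h | h
    · exact Real.rpow_nonneg h _
    · rw [Real.rpow_def_of_neg h]
      apply mul_nonneg (Real.exp_nonneg _)
      apply Real.cos_nonneg_of_mem_Icc
      constructor
      · nlinarith [Real.pi_pos]
      · nlinarith [Real.pi_pos]
  have hIci : Convex ℝ (Set.Ici (0:ℝ)) := convex_Ici 0
  have hcont : ContinuousOn S (Set.Ici (0:ℝ)) := fun t ht =>
    (hS t ht).continuousWithinAt
  have hintD : interior (Set.Ici (0:ℝ)) = Set.Ioi 0 := interior_Ici
  -- S is monotone on Ici 0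
  have hmono : MonotoneOn S (Set.Ici (0:ℝ)) := by
    apply monotoneOn_of_hasDerivWithinAt_nonneg hIci hcont
      (f' := fun t => (1 + S t ^ p) ^ (1 / p))
    · intro x hx
      rw [hintD] at hx ⊢
      exact ((hS x (Set.mem_Ici.mpr (le_of_lt hx))).mono (Set.Ioi_subset_Ici le_rfl))
    · intro x _
      exact hderiv_nonneg _
  -- hence S is nonnegative on Ici 0
  have hSnonneg : ∀ t ∈ Set.Ici (0:ℝ), 0 ≤ S t := by
    intro t ht
    have := hmono (Set.self_mem_Ici) ht ht
    rwa [hS0] at this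
  -- derivative at interior points is a true derivative
  have hderivAt : ∀ t ∈ Set.Ioi (0:ℝ),
      HasDerivAt S ((1 + S t ^ p) ^ (1 / p)) t := by
    intro t ht
    exact (hS t (Set.mem_Ici.mpr (le_of_lt ht))).hasDerivAt (Ici_mem_nhds ht)
  have hderiv_eq : ∀ t ∈ Set.Ioi (0:ℝ),
      deriv S t = (1 + S t ^ p) ^ (1 / p) := fun t ht => (hderivAt t ht).deriv
  -- deriv is monotone on the interior
  have hdmono : MonotoneOn (deriv S) (interior (Set.Ici (0:ℝ))) := by
    rw [hintD]
    intro a ha b hb hab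
    rw [hderiv_eq a ha, hderiv_eq b hb]
    apply Real.rpow_le_rpow
    · have : 0 ≤ S a ^ p := Real.rpow_nonneg (hSnonneg a (Set.mem_Ici.mpr (le_of_lt ha))) _
      linarith
    · have : S a ^ p ≤ S b ^ p :=
        Real.rpow_le_rpow (hSnonneg a (Set.mem_Ici.mpr (le_of_lt ha)))
          (hmono (Set.mem_Ici.mpr (le_of_lt ha)) (Set.mem_Ici.mpr (le_of_lt hb)) hab) (le_of_lt hp0)
      linarith
    · exact le_of_lt hip
  have hdiff : DifferentiableOn ℝ S (interior (Set.Ici (0:ℝ))) := by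
    rw [hintD]
    exact fun t ht => (hderivAt t ht).differentiableAt.differentiableWithinAt
  have hconv : ConvexOn ℝ (Set.Ici (0:ℝ)) S :=
    hdmono.convexOn_of_deriv hIci hcont hdiff
  -- S t ≥ t on Ici 0, via (S - id) monotone
  have hge : ∀ t ∈ Set.Ici (0:ℝ), t ≤ S t := by
    have hmono2 : MonotoneOn (fun t => S t - t) (Set.Ici (0:ℝ)) := by
      apply monotoneOn_of_hasDerivWithinAt_nonneg hIci
        (hcont.sub continuousOn_id)
        (f' := fun t => (1 + S t ^ p) ^ (1 / p) - 1)
      · intro x hx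
        rw [hintD] at hx ⊢
        exact ((hS x (Set.mem_Ici.mpr (le_of_lt hx))).mono (Set.Ioi_subset_Ici le_rfl)).sub
          (hasDerivWithinAt_id x _)
      · intro x hx
        rw [hintD] at hx
        have hb : (1:ℝ) ≤ 1 + S x ^ p := by
          have : 0 ≤ S x ^ p := Real.rpow_nonneg (hSnonneg x (Set.mem_Ici.mpr (le_of_lt hx))) _
          linarith
        have := Real.one_le_rpow hb (le_of_lt hip)
        linarith
    intro t ht
    have := hmono2 Set.self_mem_Ici ht ht
    simp only [hS0, sub_zero, sub_self, zero_sub] at this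
    linarith
  -- now conclude
  intro a ha b hb hab
  rcases eq_or_lt_of_le hab with rfl | hab
  · exact le_refl _
  have hbpos : 0 < b := lt_of_le_of_lt ha hab
  have hbne : b ≠ 0 := ne_of_gt hbpos
  simp only [hbne, if_false]
  rcases eq_or_lt_of_le (Set.mem_Ici.mp ha) with rfl | hapos
  · rw [if_pos rfl, le_div_iff₀ hbpos, one_mul]
    exact hge b (le_of_lt hbpos)
  · have hane : a ≠ 0 := ne_of_gt hapos
    simp only [hane, if_false]
    have := hconv.secant_mono (a := 0) Set.self_mem_Ici ha hb hane hbne (le_of_lt hab)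
    simpa [hS0] using this
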